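/- For all vectors x, y in ℝ^N and every real γ with 1/2 < γ ≤ 1, one has (|x| + |y|)^{2-2γ} · ((|x|^{2γ-2} x - |y|^{2γ-2} y) · (x - y)) ≥ (2γ - 1) |x - y|^2. -/

import Mathlib

open Real

lemma aux_mul {a β : ℝ} (ha : 0 ≤ a) (hβ : 0 < β) : a ^ (β - 1) * a = a ^ β := by
  rcases ha.eq_or_lt with rfl | h
  · simp [Real.zero_rpow hβ.ne']
  · have : a ^ (β - 1) * a ^ (1 : ℝ) = a ^ β := by
      rw [← Real.rpow_add h]; ring_nf
    simpa [Real.rpow_one] using this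

-- tangent line inequality for concave rpow
lemma tangent {a b β : ℝ} (ha : 0 < a) (hb : 0 ≤ b) (hβ0 : 0 < β) (hβ1 : β ≤ 1) :
    b ^ β ≤ a ^ β + β * a ^ (β - 1) * (b - a) := by
  have hs : -1 ≤ (b - a) / a := by
    rw [le_div_iff₀ ha]; linarith
  have hbern := rpow_one_add_le_one_add_mul_self hs hβ0.le hβ1
  have h1 : 1 + (b - a) / a = b / a := by field_simp; ring
  rw [h1, Real.div_rpow hb ha.le] at hbern
  have hapow : (0:ℝ) < a ^ β := Real.rpow_pos_of_pos ha β
  have h2 := mul_le_mul_of_nonneg_right hbern hapow.le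
  have h3 : b ^ β / a ^ β * a ^ β = b ^ β := div_mul_cancel₀ _ hapow.ne'
  have hdiv : a ^ β / a = a ^ (β - 1) := by
    rw [Real.rpow_sub ha, Real.rpow_one]
  have h4 : (1 + β * ((b - a) / a)) * a ^ β = a ^ β + β * (a ^ β / a) * (b - a) := by
    field_simp
  rw [h3, h4, hdiv] at h2
  exact h2

lemma E1core {a b β : ℝ} (hb : 0 ≤ b) (hba : b ≤ a) (hβ0 : 0 < β) (hβ1 : β ≤ 1) :
    β * (a - b) ≤ (a + b) ^ (1 - β) * (a ^ β - b ^ β) := by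
  rcases (hb.trans hba).eq_or_lt with rfl | ha0
  · have : b = 0 := le_antisymm hba hb
    simp [this]
  · have hs : 0 < a + b := by linarith
    have hApos : (0:ℝ) < (a + b) ^ (1 - β) := Real.rpow_pos_of_pos hs _
    have htan := tangent ha0 hb hβ0 hβ1
    have hmono : (a + b) ^ (β - 1) ≤ a ^ (β - 1) :=
      Real.rpow_le_rpow_of_nonpos ha0 (by linarith) (by linarith)
    have hAid : (a + b) ^ (1 - β) * (a + b) ^ (β - 1) = 1 := by
      rw [← Real.rpow_add hs]; norm_num
    have fact1 : (a + b) ^ (1 - β) * (β * a ^ (β - 1) * (a - b)) ≤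
        (a + b) ^ (1 - β) * (a ^ β - b ^ β) :=
      mul_le_mul_of_nonneg_left (by linarith) hApos.le
    have fact2 : ((a + b) ^ (1 - β) * β * (a - b)) * ((a + b) ^ (β - 1)) ≤
        ((a + b) ^ (1 - β) * β * (a - b)) * (a ^ (β - 1)) :=
      mul_le_mul_of_nonneg_left hmono
        (mul_nonneg (mul_nonneg hApos.le hβ0.le) (by linarith))
    have fact3 : β * (a - b) = ((a + b) ^ (1 - β) * (a + b) ^ (β - 1)) * (β * (a - b)) := by
      rw [hAid]; ring
    nlinarith [fact1, fact2, fact3]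

lemma E2core {a b β : ℝ} (ha : 0 ≤ a) (hb : 0 ≤ b) (hs : 0 < a + b)
    (hβ0 : 0 < β) (hβ1 : β ≤ 1) :
    β * (a + b) ≤ (a + b) ^ (1 - β) * (a ^ β + b ^ β) := by
  have hApos : (0:ℝ) < (a + b) ^ (1 - β) := Real.rpow_pos_of_pos hs _
  -- subadditivity: (a+b)^β ≤ a^β + b^β
  have term : ∀ c : ℝ, 0 ≤ c → c ≤ a + b → (a + b) ^ (β - 1) * c ≤ c ^ β := by
    intro c hc hcs
    rcases hc.eq_or_lt with rfl | hc0
    · simp [Real.zero_rpow hβ0.ne']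
    · have hmono : (a + b) ^ (β - 1) ≤ c ^ (β - 1) :=
        Real.rpow_le_rpow_of_nonpos hc0 hcs (by linarith)
      calc (a + b) ^ (β - 1) * c ≤ c ^ (β - 1) * c :=
            mul_le_mul_of_nonneg_right hmono hc0.le
        _ = c ^ β := aux_mul hc0.le hβ0
  have hsum : (a + b) ^ β ≤ a ^ β + b ^ β := by
    have h1 := term a ha (by linarith)
    have h2 := term b hb (by linarith)
    have h3 : (a + b) ^ (β - 1) * (a + b) = (a + b) ^ β := aux_mul hs.le hβ0
    nlinarith [h1, h2, h3]
  have hAs : (a + b) ^ (1 - β) * (a + b) ^ β = a + b := by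
    rw [← Real.rpow_add hs]; norm_num
  have := mul_le_mul_of_nonneg_left hsum hApos.le
  nlinarith [this, hAs, hs]

lemma key {a b t β : ℝ} (ha : 0 ≤ a) (hb : 0 ≤ b) (ht : |t| ≤ a * b)
    (hβ0 : 0 < β) (hβ1 : β ≤ 1) :
    β * (a ^ 2 + b ^ 2 - 2 * t) ≤
      (a + b) ^ (1 - β) *
        (a ^ (β - 1) * a ^ 2 + b ^ (β - 1) * b ^ 2 - (a ^ (β - 1) + b ^ (β - 1)) * t) := by
  obtain ⟨ht1, ht2⟩ := abs_le.mp ht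
  rcases (add_nonneg ha hb).eq_or_lt with hs0 | hs
  · have ha0 : a = 0 := by linarith
    have hb0 : b = 0 := by linarith
    subst ha0; subst hb0
    have ht0 : t = 0 := by simp at ht1 ht2; linarith
    subst ht0
    simp
  set A := (a + b) ^ (1 - β) with hA
  set c := a ^ (β - 1) with hc
  set d := b ^ (β - 1) with hd
  set P := a ^ β with hP
  set Q := b ^ β with hQ
  have hca : c * a = P := aux_mul ha hβ0
  have hdb : d * b = Q := aux_mul hb hβ0
  -- endpoint t = a*b
  have hp : β * (a - b) ^ 2 ≤ A * ((P - Q) * (a - b)) := by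
    rcases le_total b a with h | h
    · have := E1core hb h hβ0 hβ1
      nlinarith [mul_le_mul_of_nonneg_right this (by linarith : (0:ℝ) ≤ a - b)]
    · have := E1core ha h hβ0 hβ1
      have hcomm : (b + a) ^ (1 - β) = A := by rw [hA, add_comm]
      rw [hcomm] at this
      nlinarith [mul_le_mul_of_nonneg_right this (by linarith : (0:ℝ) ≤ b - a)]
  -- endpoint t = -(a*b)
  have hm : β * (a + b) ^ 2 ≤ A * ((P + Q) * (a + b)) := by
    have := E2core ha hb hs hβ0 hβ1
    nlinarith [mul_le_mul_of_nonneg_right this hs.le]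
  have heqC : A * (c * a ^ 2) + A * (d * b ^ 2) = A * (P * a) + A * (Q * b) := by
    rw [← hca, ← hdb]; ring
  have heqB : A * ((c + d) * (a * b)) = A * (P * b) + A * (Q * a) := by
    rw [← hca, ← hdb]; ring
  have hp2 : β * (a - b) ^ 2 ≤ A * (c * a ^ 2) + A * (d * b ^ 2) - A * ((c + d) * (a * b)) := by
    linarith [hp, heqC, heqB]
  have hm2 : β * (a + b) ^ 2 ≤ A * (c * a ^ 2) + A * (d * b ^ 2) + A * ((c + d) * (a * b)) := by
    linarith [hm, heqC, heqB]
  rcases le_total (A * (c + d)) (2 * β) with hB | hB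
  · linarith [hm2, mul_nonneg (by linarith : (0:ℝ) ≤ 2 * β - A * (c + d))
      (by linarith : (0:ℝ) ≤ t + a * b)]
  · linarith [hp2, mul_nonneg (by linarith : (0:ℝ) ≤ A * (c + d) - 2 * β)
      (by linarith : (0:ℝ) ≤ a * b - t)]

theorem stmt_1 (N : ℕ) (x y : EuclideanSpace ℝ (Fin N)) (γ : ℝ) (hγ₁ : 1 / 2 < γ)
    (hγ₂ : γ ≤ 1) :
    (‖x‖ + ‖y‖) ^ (2 - 2 * γ) *
        (inner ℝ ((‖x‖ ^ (2 * γ - 2) : ℝ) • x - (‖y‖ ^ (2 * γ - 2) : ℝ) • y) (x - y) : ℝ) ≥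
      (2 * γ - 1) * ‖x - y‖ ^ 2 := by
  have ha : (0:ℝ) ≤ ‖x‖ := norm_nonneg x
  have hb : (0:ℝ) ≤ ‖y‖ := norm_nonneg y
  have ht : |(inner ℝ x y : ℝ)| ≤ ‖x‖ * ‖y‖ := abs_real_inner_le_norm x y
  have hinner : (inner ℝ ((‖x‖ ^ (2 * γ - 2) : ℝ) • x - (‖y‖ ^ (2 * γ - 2) : ℝ) • y) (x - y) : ℝ)
      = ‖x‖ ^ (2 * γ - 2) * ‖x‖ ^ 2 + ‖y‖ ^ (2 * γ - 2) * ‖y‖ ^ 2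
        - (‖x‖ ^ (2 * γ - 2) + ‖y‖ ^ (2 * γ - 2)) * (inner ℝ x y : ℝ) := by
    simp only [inner_sub_left, inner_sub_right, real_inner_smul_left,
      real_inner_self_eq_norm_sq, real_inner_comm y x]
    ring
  have hnorm : ‖x - y‖ ^ 2 = ‖x‖ ^ 2 - 2 * (inner ℝ x y : ℝ) + ‖y‖ ^ 2 :=
    norm_sub_sq_real x y
  have e1 : (2:ℝ) - 2 * γ = 1 - (2 * γ - 1) := by ring
  have e2 : 2 * γ - 2 = (2 * γ - 1) - 1 := by ring
  rw [ge_iff_le, hinner, hnorm, e1, e2]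
  have hkey := key (t := (inner ℝ x y : ℝ)) (β := 2 * γ - 1) ha hb ht
    (by linarith) (by linarith)
  linarith [hkey]
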